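/- In the localization of U_q^−(sl_{n+1}) at F_{i+1} (q not a root of unity), define S¹(t) = F_{i+1}^t F_i F_{i+1}^{1−t} := {t} F_{i+1} F_i F_{i+1}^{−1}·F_{i+1} + {1−t} F_i F_{i+1}, i.e., S¹(t) = {t} F_{i+1} F_i + {1−t} F_i F_{i+1}, with {t} = (q^t − q^{−t})/(q − q^{−1}). Then for any integer N ≥ 1 and t ∈ ℤ, F_{i+1}^t F_i^N F_{i+1}^{N−t} = S¹(t) S¹(t−1) ⋯ S¹(t−N+1). -/

import Mathlib

/-- The symmetric q-number `{k} = (q^k - q^{-k})/(q - q^{-1})`. -/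
noncomputable def symQNum (q : ℂ) (k : ℤ) : ℂ := (q ^ k - q ^ (-k)) / (q - q⁻¹)

/-- in the localization of `U_q⁻(sl_{n+1})` at `F_{i+1}` (q not a root of
unity), with `S¹(t) = {t} F_{i+1}F_i + {1-t} F_iF_{i+1}`, one has for every `N ≥ 1` and
`t ∈ ℤ`:  `F_{i+1}^t F_i^N F_{i+1}^{N-t} = S¹(t) S¹(t-1) ⋯ S¹(t-N+1)`. -/
theorem singular_vector_factorization
    (A : Type*) [Ring A] [Algebra ℂ A]
    (q : ℂ) (hq : q ≠ 0) (hq_not_root : ∀ k : ℕ, 0 < k → q ^ k ≠ 1)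
    -- `Fi` is the image of `F_i`; the unit `u` is the (invertible) image of `F_{i+1}`
    (Fi : A) (u : Aˣ)
    -- quantum Serre relations between `F_i` and `F_{i+1}`
    (hSerre₁ : (u : A) ^ 2 * Fi - (q + q⁻¹) • ((u : A) * Fi * (u : A)) + Fi * (u : A) ^ 2 = 0)
    (hSerre₂ : Fi ^ 2 * (u : A) - (q + q⁻¹) • (Fi * (u : A) * Fi) + (u : A) * Fi ^ 2 = 0)
    -- `S¹(t) = {t} F_{i+1} F_i + {1-t} F_i F_{i+1}`
    (S : ℤ → A)
    (hS : ∀ t : ℤ, S t = symQNum q t • ((u : A) * Fi) + symQNum q (1 - t) • (Fi * (u : A)))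
    (N : ℕ) (hN : 1 ≤ N) (t : ℤ) :
    ((u ^ t : Aˣ) : A) * Fi ^ N * ((u ^ ((N : ℤ) - t) : Aˣ) : A) =
      ((List.range N).map (fun j => S (t - j))).prod := by
  -- q - q⁻¹ ≠ 0
  have hd : q - q⁻¹ ≠ 0 := by
    intro h
    have h2 : q * q = 1 := by
      have := sub_eq_zero.mp h
      field_simp [hq] at this
      linear_combination this
    exact hq_not_root 2 (by norm_num) (by rw [sq]; exact h2)
  -- recurrence for symmetric q-numbers
  have sym_rec : ∀ s : ℤ, symQNum q (s+1) + symQNum q (s-1) = (q + q⁻¹) * symQNum q s := by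
    intro s
    simp only [symQNum]
    rw [← add_div, ← mul_div_assoc]
    congr 1
    have h1 : q ^ (s+1) = q ^ s * q := zpow_add_one₀ hq s
    have h2 : q ^ (s-1) = q ^ s * q⁻¹ := zpow_sub_one₀ hq s
    have h3 : q ^ (-(s+1)) = q ^ (-s) * q⁻¹ := by
      rw [show -(s+1) = -s - 1 by ring, zpow_sub_one₀ hq]
    have h4 : q ^ (-(s-1)) = q ^ (-s) * q := by
      rw [show -(s-1) = -s + 1 by ring, zpow_add_one₀ hq]
    have h5 : q ^ (-s) = (q ^ s)⁻¹ := zpow_neg q s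
    have hx : q ^ s ≠ 0 := zpow_ne_zero s hq
    rw [h1, h2, h3, h4, h5]
    field_simp
    ring
  -- conjugation relation from the Serre relation
  have conj : (u : A) * Fi * (↑u⁻¹ : A) + (↑u⁻¹ : A) * Fi * (u : A) = (q + q⁻¹) • Fi := by
    have h := hSerre₁
    have h' : (u : A) ^ 2 * Fi + Fi * (u : A) ^ 2 = (q + q⁻¹) • ((u : A) * Fi * (u : A)) := by
      linear_combination (norm := noncomm_ring) h
    calc (u : A) * Fi * (↑u⁻¹ : A) + (↑u⁻¹ : A) * Fi * (u : A)
        = (↑u⁻¹ : A) * ((u : A) ^ 2 * Fi + Fi * (u : A) ^ 2) * (↑u⁻¹ : A) := by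
          have hu1 : (↑u⁻¹ : A) * (u : A) = 1 := u.inv_mul
          have hu2 : (u : A) * (↑u⁻¹ : A) = 1 := u.mul_inv
          calc (u : A) * Fi * (↑u⁻¹ : A) + (↑u⁻¹ : A) * Fi * (u : A)
              = ((↑u⁻¹ : A) * (u : A)) * ((u : A) * Fi * ((↑u⁻¹ : A)))
                + (↑u⁻¹ : A) * Fi * ((u : A) * ((u : A) * (↑u⁻¹ : A))) := by
                rw [hu1, hu2]; noncomm_ring
            _ = (↑u⁻¹ : A) * ((u : A) ^ 2 * Fi + Fi * (u : A) ^ 2) * (↑u⁻¹ : A) := by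
                noncomm_ring
      _ = (↑u⁻¹ : A) * ((q + q⁻¹) • ((u : A) * Fi * (u : A))) * (↑u⁻¹ : A) := by rw [h']
      _ = (q + q⁻¹) • ((↑u⁻¹ : A) * ((u : A) * Fi * (u : A)) * (↑u⁻¹ : A)) := by
          rw [mul_smul_comm, smul_mul_assoc]
      _ = (q + q⁻¹) • Fi := by
          rw [show (↑u⁻¹ : A) * ((u : A) * Fi * (u : A)) * (↑u⁻¹ : A)
              = ((↑u⁻¹ : A) * (u : A)) * Fi * ((u : A) * (↑u⁻¹ : A)) by noncomm_ring,
            u.inv_mul, u.mul_inv, one_mul, mul_one]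
  -- LHS for N = 1
  set L : ℤ → A := fun s => ((u ^ s : Aˣ) : A) * Fi * ((u ^ (1 - s) : Aˣ) : A) with hL
  have upow : ∀ a b : ℤ, ((u ^ (a + b) : Aˣ) : A) = ((u ^ a : Aˣ) : A) * ((u ^ b : Aˣ) : A) := by
    intro a b; rw [zpow_add, Units.val_mul]
  -- recurrence for L
  have Lrec : ∀ s : ℤ, L (s+1) + L (s-1) = (q + q⁻¹) • L s := by
    intro s
    have e1 : ((u ^ (s+1) : Aˣ) : A) = ((u ^ s : Aˣ) : A) * (u : A) := by
      rw [upow s 1]; simp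
    have e2 : ((u ^ (s-1) : Aˣ) : A) = ((u ^ s : Aˣ) : A) * (↑u⁻¹ : A) := by
      rw [show s - 1 = s + (-1) by ring, upow s (-1)]; simp
    have e3 : ((u ^ (1-(s+1)) : Aˣ) : A) = (↑u⁻¹ : A) * ((u ^ (1-s) : Aˣ) : A) := by
      rw [show 1 - (s+1) = (-1) + (1 - s) by ring, upow (-1) (1-s)]; simp
    have e4 : ((u ^ (1-(s-1)) : Aˣ) : A) = (u : A) * ((u ^ (1-s) : Aˣ) : A) := by
      rw [show 1 - (s-1) = 1 + (1 - s) by ring, upow 1 (1-s)]; simp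
    simp only [hL, e1, e2, e3, e4]
    calc ((u ^ s : Aˣ) : A) * (u : A) * Fi * ((↑u⁻¹ : A) * ((u ^ (1-s) : Aˣ) : A))
          + ((u ^ s : Aˣ) : A) * (↑u⁻¹ : A) * Fi * ((u : A) * ((u ^ (1-s) : Aˣ) : A))
        = ((u ^ s : Aˣ) : A) * ((u : A) * Fi * (↑u⁻¹ : A) + (↑u⁻¹ : A) * Fi * (u : A))
            * ((u ^ (1-s) : Aˣ) : A) := by noncomm_ring
      _ = ((u ^ s : Aˣ) : A) * ((q + q⁻¹) • Fi) * ((u ^ (1-s) : Aˣ) : A) := by rw [conj]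
      _ = (q + q⁻¹) • (((u ^ s : Aˣ) : A) * Fi * ((u ^ (1-s) : Aˣ) : A)) := by
          rw [mul_smul_comm, smul_mul_assoc]
  -- recurrence for S
  have Srec : ∀ s : ℤ, S (s+1) + S (s-1) = (q + q⁻¹) • S s := by
    intro s
    rw [hS, hS, hS]
    have c1 := sym_rec s
    have c2 := sym_rec (1 - s)
    rw [show (1-s) + 1 = 1 - (s - 1) by ring, show (1-s) - 1 = 1 - (s + 1) by ring] at c2
    rw [smul_add, smul_smul, smul_smul, ← c1, ← c2]
    module
  -- simple values
  have sym0 : symQNum q 0 = 0 := by simp [symQNum]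
  have sym1 : symQNum q 1 = 1 := by
    simp only [symQNum, zpow_one, zpow_neg_one]
    exact div_self hd
  -- base cases
  have key0 : L 0 = S 0 := by
    simp only [hL]
    rw [hS 0, sym0, sub_zero, sym1, zero_smul, one_smul, zero_add]
    simp
  have key1 : L 1 = S 1 := by
    simp only [hL]
    rw [hS 1, sym1, sub_self, sym0, zero_smul, one_smul, add_zero]
    simp
  -- step lemmas
  have step_up : ∀ s : ℤ, L s = S s → L (s+1) = S (s+1) → L (s+2) = S (s+2) := by
    intro s h0 h1
    have hl := Lrec (s+1)
    have hs := Srec (s+1)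
    rw [show s + 1 + 1 = s + 2 by ring, show s + 1 - 1 = s by ring] at hl hs
    rw [h0, h1] at hl
    exact add_right_cancel (hl.trans hs.symm)
  have step_down : ∀ s : ℤ, L s = S s → L (s+1) = S (s+1) → L (s-1) = S (s-1) := by
    intro s h0 h1
    have hl := Lrec s
    have hs := Srec s
    rw [h0, h1] at hl
    exact add_left_cancel (hl.trans hs.symm)
  -- key identity for all integers
  have key : ∀ s : ℤ, L s = S s := by
    have main : ∀ s : ℤ, L s = S s ∧ L (s+1) = S (s+1) := by
      intro s
      induction s using Int.induction_on with
      | zero => exact ⟨key0, by simpa using key1⟩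
      | succ n ih =>
        refine ⟨ih.2, ?_⟩
        have := step_up n ih.1 ih.2
        rw [show (n : ℤ) + 2 = (n : ℤ) + 1 + 1 by ring] at this
        exact this
      | pred n ih =>
        refine ⟨?_, by rw [show -(n:ℤ) - 1 + 1 = -(n:ℤ) by ring]; exact ih.1⟩
        have := step_down (-(n:ℤ)) ih.1 ih.2
        rw [show -(n:ℤ) - 1 = -(n:ℤ) + -1 by ring]
        rw [show -(n:ℤ) - 1 = -(n:ℤ) + -1 by ring] at this
        exact this
    exact fun s => (main s).1
  -- main induction on N
  clear hN
  induction N generalizing t with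
  | zero =>
    simp only [List.range_zero, List.map_nil, List.prod_nil, pow_zero, mul_one,
      Nat.cast_zero, zero_sub]
    rw [← Units.val_mul, ← zpow_add]
    simp
  | succ n ih =>
    have hsplit : ((u ^ t : Aˣ) : A) * Fi ^ (n+1) * ((u ^ (((n:ℤ)+1) - t) : Aˣ) : A)
        = L t * (((u ^ (t-1) : Aˣ) : A) * Fi ^ n * ((u ^ ((n:ℤ) - (t-1)) : Aˣ) : A)) := by
      simp only [hL]
      have em : ((u ^ (1-t) : Aˣ) : A) * ((u ^ (t-1) : Aˣ) : A) = 1 := by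
        rw [← Units.val_mul, ← zpow_add, show (1-t) + (t-1) = 0 by ring, zpow_zero,
          Units.val_one]
      have eend : ((u ^ ((n:ℤ) - (t-1)) : Aˣ) : A) = ((u ^ (((n:ℤ)+1) - t) : Aˣ) : A) := by
        congr 1; ring_nf
      rw [eend]
      calc ((u ^ t : Aˣ) : A) * Fi ^ (n+1) * ((u ^ (((n:ℤ)+1) - t) : Aˣ) : A)
          = ((u ^ t : Aˣ) : A) * Fi * ((((u ^ (1-t) : Aˣ) : A) * ((u ^ (t-1) : Aˣ) : A))
              * (Fi ^ n * ((u ^ (((n:ℤ)+1) - t) : Aˣ) : A))) := by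
            rw [em, one_mul, pow_succ']; noncomm_ring
        _ = ((u ^ t : Aˣ) : A) * Fi * ((u ^ (1-t) : Aˣ) : A)
              * (((u ^ (t-1) : Aˣ) : A) * Fi ^ n * ((u ^ (((n:ℤ)+1) - t) : Aˣ) : A)) := by
            noncomm_ring
    have hcast : ((n+1 : ℕ) : ℤ) = (n : ℤ) + 1 := by push_cast; ring
    rw [hcast, hsplit, key t, ih (t-1)]
    simp only [bind_pure_comp, List.map_eq_map, List.map_map, List.range_succ_eq_map,
      List.map_cons, List.prod_cons, Function.comp_def]
    congr 1
    · congr 1; norm_num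
    · congr 2
      funext x
      congr 1
      push_cast [Nat.succ_eq_add_one]
      ring
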